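/- arXiv:1902.05976 — 3 statements merged into one kernel-verified Lean document; each statement's English description precedes it below -/
import Mathlib

section
/- Let m, k, j be positive integers with j ≥ 1, let 1_{m,k} be the m×k all-ones matrix, and let Δ ∈ ℤ^{m×m} be the backward difference matrix. Define a_{l,s} by a_{0,s} = 1 for s ≥ 1, a_{0,s} = 0 for s ≤ 0, and a_{l,s} = Σ_{n ≤ s} a_{l-1,n}. Then for all 1 ≤ l ≤ m and all 1 ≤ s ≤ k, (Δ^{-j} 1_{m,k})_{l,s} = a_{j,l}. -/
/-- The backward difference matrix over ℤ. -/
def backDiff (n : ℕ) : Matrix (Fin n) (Fin n) ℤ :=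
  Matrix.of fun i j => if i = j then 1 else if i.val = j.val + 1 then -1 else 0

/-- The double sequence a_{l,s}. -/
noncomputable def aSeq : ℕ → ℤ → ℤ
  | 0, s => if 1 ≤ s then 1 else 0
  | l + 1, s => ∑ n ∈ Finset.Icc 1 s, aSeq l n

/-- lower triangular all-ones matrix -/
def lowerOnes (n : ℕ) : Matrix (Fin n) (Fin n) ℤ :=
  Matrix.of fun i j => if j ≤ i then 1 else 0

lemma backDiff_mul_lowerOnes (m : ℕ) : backDiff m * lowerOnes m = 1 := by
  ext i j
  rw [Matrix.mul_apply]
  have hpt : ∀ x : Fin m,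
      (backDiff m) i x * (lowerOnes m) x j
        = (if x = i then (if j ≤ i then (1:ℤ) else 0) else 0)
          + (if (x:ℕ) + 1 = (i:ℕ) then (if j ≤ x then (-1:ℤ) else 0) else 0) := by
    intro x
    simp only [backDiff, lowerOnes, Matrix.of_apply]
    rcases eq_or_ne i x with h | h
    · subst h; simp
    · simp [h, Ne.symm h, Fin.ext_iff, eq_comm]
      split_ifs <;> omega
  rw [Finset.sum_congr rfl (fun x _ => hpt x), Finset.sum_add_distrib,
    Finset.sum_ite_eq' Finset.univ i]
  simp only [Finset.mem_univ, if_true]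
  rcases i with ⟨iv, hiv⟩
  cases iv with
  | zero =>
    rw [Finset.sum_eq_zero (by intro x _; simp)]
    simp only [Matrix.one_apply, Fin.le_def, Fin.ext_iff, add_zero]
    split_ifs <;> omega
  | succ t =>
    have ht : t < m := Nat.lt_of_succ_lt hiv
    rw [Fintype.sum_eq_single (⟨t, ht⟩ : Fin m) (by
      intro x hx
      have hxt : (x:ℕ) ≠ t := fun h => hx (Fin.ext h)
      have : (x:ℕ) + 1 ≠ t + 1 := by omega
      simp [this, hxt])]
    simp only [Matrix.one_apply, Fin.le_def, Fin.ext_iff]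
    split_ifs <;> omega

lemma backDiff_inv (m : ℕ) : (backDiff m)⁻¹ = lowerOnes m :=
  Matrix.inv_eq_right_inv (backDiff_mul_lowerOnes m)

lemma icc_eq (N : ℕ) :
    Finset.Icc (1:ℤ) (N:ℤ) = (Finset.range N).map (⟨fun n : ℕ => (n:ℤ)+1, by intro a b h; simpa using h⟩ : ℕ ↪ ℤ) := by
  ext x
  simp only [Finset.mem_Icc, Finset.mem_map, Finset.mem_range, Function.Embedding.coeFn_mk]
  constructor
  · rintro ⟨h1, h2⟩
    refine ⟨(x-1).toNat, by omega, by show ((x-1).toNat : ℤ) + 1 = x; omega⟩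
  · rintro ⟨a, ha, rfl⟩; show 1 ≤ (a:ℤ) + 1 ∧ (a:ℤ) + 1 ≤ N; omega

lemma key (m k : ℕ) (j : ℕ) :
    ∀ (l : Fin m) (s : Fin k),
      ((lowerOnes m ^ j) * Matrix.of (fun (_ : Fin m) (_ : Fin k) => (1 : ℤ))) l s
        = aSeq j (l.val + 1) := by
  induction j with
  | zero =>
    intro l s
    have h1 : (1:ℤ) ≤ (l:ℕ) + 1 := by omega
    simp [aSeq, h1]
  | succ j ih =>
    intro l s
    rw [pow_succ', Matrix.mul_assoc, Matrix.mul_apply]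
    have hpt : ∀ x : Fin m,
        (lowerOnes m) l x * ((lowerOnes m ^ j) * Matrix.of (fun (_ : Fin m) (_ : Fin k) => (1 : ℤ))) x s
          = if (x:ℕ) ≤ (l:ℕ) then aSeq j ((x:ℕ) + 1) else 0 := by
      intro x
      rw [ih x s]
      simp only [lowerOnes, Matrix.of_apply, Fin.le_def]
      by_cases h : (x:ℕ) ≤ (l:ℕ)
      · rw [if_pos h, if_pos h, one_mul]
      · rw [if_neg h, if_neg h, zero_mul]
    rw [Finset.sum_congr rfl (fun x _ => hpt x)]
    rw [Fin.sum_univ_eq_sum_range (fun n => if n ≤ (l:ℕ) then aSeq j ((n:ℤ) + 1) else 0)]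
    rw [← Finset.sum_filter]
    have hfilt : (Finset.range m).filter (fun n => n ≤ (l:ℕ)) = Finset.range ((l:ℕ)+1) := by
      ext n; simp [Nat.lt_succ_iff]
      intro h; omega
    rw [hfilt]
    show _ = aSeq (j+1) ((l:ℕ)+1)
    rw [show aSeq (j+1) ((l:ℕ)+1) = ∑ n ∈ Finset.Icc (1:ℤ) (((l:ℕ)+1 : ℕ) : ℤ), aSeq j n by
      simp [aSeq]]
    rw [icc_eq, Finset.sum_map]
    rfl

theorem stmt3 (m k j : ℕ) (hm : 0 < m) (hk : 0 < k) (hj : 1 ≤ j) :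
    ∀ (l : Fin m) (s : Fin k),
      (((backDiff m)⁻¹ ^ j) * Matrix.of (fun (_ : Fin m) (_ : Fin k) => (1 : ℤ))) l s
        = aSeq j (l.val + 1) := by
  rw [backDiff_inv]
  exact key m k j
end

section
/- Let λ be a nonzero integer with |λ| ≤ η/2, where η = m/ρ for positive integers m, ρ with ρ ∣ m. Then |(1 - e^{2πiρλ/m}) / (ρ(1 - e^{2πiλ/m}))| ≥ 2/π. -/
open Real Complex

lemma abs_one_sub_exp_mul_I (θ : ℝ) :
    ‖(1 - Complex.exp ((θ : ℂ) * Complex.I))‖ = 2 * |Real.sin (θ / 2)| := by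
  rw [Complex.exp_mul_I, ← Complex.ofReal_cos, ← Complex.ofReal_sin]
  have h : (1 : ℂ) - (↑(Real.cos θ) + ↑(Real.sin θ) * Complex.I)
      = Complex.ofReal (1 - Real.cos θ) + Complex.ofReal (-Real.sin θ) * Complex.I := by
    push_cast; ring
  rw [h, Complex.norm_def, Complex.normSq_add_mul_I, Real.abs_sin_half]
  have h4 : Real.sqrt 4 = 2 := by
    rw [show (4:ℝ) = 2^2 by norm_num, Real.sqrt_sq (by norm_num)]
  rw [show (2:ℝ) * Real.sqrt ((1 - Real.cos θ) / 2) = Real.sqrt (4 * ((1 - Real.cos θ)/2)) by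
    rw [Real.sqrt_mul (by norm_num), h4]]
  congr 1
  nlinarith [Real.sin_sq_add_cos_sq θ]

theorem stmt7 (m ρ : ℕ) (hρ : 0 < ρ) (hdvd : ρ ∣ m) (η : ℕ) (hη : η = m / ρ) (hηpos : 0 < η)
    (lam : ℤ) (hlam : lam ≠ 0) (hbd : |(lam : ℝ)| ≤ (η : ℝ) / 2) :
    2 / π ≤ ‖
      ((1 - Complex.exp (2 * π * Complex.I * ρ * lam / m)) /
        (ρ * (1 - Complex.exp (2 * π * Complex.I * lam / m))))‖ := by
  have hmk : m = ρ * η := by rw [hη, Nat.mul_div_cancel' hdvd]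
  have hm : (m : ℝ) = ρ * η := by exact_mod_cast congrArg Nat.cast hmk
  have hρR : (0:ℝ) < ρ := by exact_mod_cast hρ
  have hηR : (0:ℝ) < η := by exact_mod_cast hηpos
  have hmpos : (0:ℝ) < m := by rw [hm]; positivity
  have hlamR : (0:ℝ) < |(lam:ℝ)| := by
    simp only [abs_pos]; exact_mod_cast hlam
  have e1 : (2 * ↑π * Complex.I * ↑ρ * ↑lam / ↑m : ℂ)
      = ((2 * π * ρ * lam / m : ℝ) : ℂ) * Complex.I := by push_cast; ring
  have e2 : (2 * ↑π * Complex.I * ↑lam / ↑m : ℂ)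
      = ((2 * π * lam / m : ℝ) : ℂ) * Complex.I := by push_cast; ring
  rw [e1, e2, norm_div, norm_mul, abs_one_sub_exp_mul_I, abs_one_sub_exp_mul_I,
    Complex.norm_natCast]
  have harg1 : (2 * π * ρ * lam / m) / 2 = π * lam / η := by
    rw [hm]; field_simp
  have harg2 : (2 * π * lam / m) / 2 = π * lam / m := by ring
  rw [harg1, harg2]
  have hub : |Real.sin (π * lam / m)| ≤ π * |(lam:ℝ)| / m := by
    calc |Real.sin (π * lam / m)| ≤ |π * lam / m| := Real.abs_sin_le_abs
    _ = π * |(lam:ℝ)| / m := by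
        rw [abs_div, abs_mul, abs_of_pos Real.pi_pos, abs_of_pos hmpos]
  have hlb : 2 * |(lam:ℝ)| / η ≤ |Real.sin (π * lam / η)| := by
    have h1 : |π * lam / η| ≤ π / 2 := by
      rw [abs_div, abs_mul, abs_of_pos Real.pi_pos, abs_of_pos hηR,
        div_le_div_iff₀ hηR (by norm_num)]
      nlinarith [Real.pi_pos]
    have h2 := Real.mul_le_sin (x := |π * ↑lam / ↑η|) (abs_nonneg _) h1
    calc 2 * |(lam:ℝ)| / η = 2 / π * |π * lam / η| := by
          rw [abs_div, abs_mul, abs_of_pos Real.pi_pos, abs_of_pos hηR]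
          field_simp
      _ ≤ Real.sin |π * lam / η| := h2
      _ ≤ |Real.sin (π * lam / η)| := by
          rcases abs_choice (π * (lam:ℝ) / η) with h | h <;> rw [h]
          · exact le_abs_self _
          · rw [Real.sin_neg]; exact neg_le_abs _
  have hsin_ne : Real.sin (π * lam / m) ≠ 0 := by
    have hlt : |π * lam / m| < π := by
      rw [abs_div, abs_mul, abs_of_pos Real.pi_pos, abs_of_pos hmpos, div_lt_iff₀ hmpos]
      have hlm : |(lam:ℝ)| < m := by
        rw [hm]
        calc |(lam:ℝ)| ≤ η / 2 := hbd
          _ < ρ * η := by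
              have hρ1 : (1:ℝ) ≤ ρ := by exact_mod_cast hρ
              nlinarith [mul_le_mul_of_nonneg_right hρ1 hηR.le]
      nlinarith [Real.pi_pos]
    have hne : π * (lam:ℝ) / m ≠ 0 := by
      apply div_ne_zero _ (ne_of_gt hmpos)
      apply mul_ne_zero (ne_of_gt Real.pi_pos)
      exact_mod_cast hlam
    intro h0
    rw [Real.sin_eq_zero_iff_of_lt_of_lt (abs_lt.1 hlt).1 (lt_of_abs_lt hlt)] at h0
    exact hne h0
  have hden_pos : (0:ℝ) < ρ * (2 * |Real.sin (π * lam / m)|) := by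
    have := abs_pos.mpr hsin_ne
    positivity
  rw [le_div_iff₀ hden_pos]
  calc 2 / π * (↑ρ * (2 * |Real.sin (π * lam / m)|))
      ≤ 2 / π * (↑ρ * (2 * (π * |(lam:ℝ)| / m))) := by
        apply mul_le_mul_of_nonneg_left _ (by positivity)
        apply mul_le_mul_of_nonneg_left _ (by positivity)
        linarith
    _ = 2 * (2 * |(lam:ℝ)| / η) := by
        rw [hm]; field_simp
    _ ≤ 2 * |Real.sin (π * lam / η)| := by linarith
end

section
/- Let V ∈ ℂ^{k×k} be diagonal with diagonal vector φ_0 of unit Euclidean norm, and let 1_{k,η} be the k×η all-ones matrix and Δ ∈ ℤ^{η×η} the backward difference matrix. Then for every integer p ≥ 1, the ∞-to-2 operator norm satisfies ‖V^* 1_{k,η} Δ^p‖_{∞,2} = 2^{p-1}, provided η ≥ p+1. -/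
open Real Matrix

/-- The backward difference matrix over ℂ. -/
def backDiffC (n : ℕ) : Matrix (Fin n) (Fin n) ℂ :=
  Matrix.of fun i j => if i = j then 1 else if i.val = j.val + 1 then -1 else 0

lemma vecMul_backDiff {η : ℕ} (v : Fin η → ℂ) (j : Fin η) :
    (v ᵥ* backDiffC η) j = v j - (if h : j.val + 1 < η then v ⟨j.val + 1, h⟩ else 0) := by
  classical
  simp only [Matrix.vecMul, dotProduct, backDiffC, Matrix.of_apply]
  have key : ∀ i : Fin η, v i * (if i = j then (1:ℂ) else if i.val = j.val + 1 then -1 else 0)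
      = (if i = j then v i else 0) + (if i.val = j.val + 1 then -(v i) else 0) := by
    intro i
    rcases eq_or_ne i j with rfl | h
    · simp
    · simp only [if_neg h]
      split_ifs <;> ring
  rw [Finset.sum_congr rfl (fun i _ => key i), Finset.sum_add_distrib,
    Finset.sum_ite_eq' Finset.univ j]
  simp only [Finset.mem_univ, if_true]
  have : ∑ i : Fin η, (if i.val = j.val + 1 then -(v i) else 0)
      = -(if h : j.val + 1 < η then v ⟨j.val + 1, h⟩ else 0) := by
    by_cases h : j.val + 1 < η
    · rw [dif_pos h]
      have hc : ∀ i : Fin η, (i.val = j.val + 1) ↔ i = ⟨j.val + 1, h⟩ := by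
        intro i; exact ⟨fun hi => Fin.ext hi, fun hi => by rw [hi]⟩
      calc ∑ i : Fin η, (if i.val = j.val + 1 then -(v i) else 0)
          = ∑ i : Fin η, (if i = (⟨j.val + 1, h⟩ : Fin η) then -(v i) else 0) :=
            Finset.sum_congr rfl (fun i _ => if_congr (hc i) rfl rfl)
        _ = -(v ⟨j.val + 1, h⟩) := by
            rw [Finset.sum_ite_eq' Finset.univ]; simp
    · rw [dif_neg h]
      rw [Finset.sum_eq_zero]
      · simp
      · intro i _
        have hi : ¬ (i.val = j.val + 1) := by have := i.isLt; omega
        simp [hi]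
  rw [this]; ring

/-- signed binomial row -/
noncomputable def fvec (η q : ℕ) : Fin η → ℂ :=
  fun j => (-1 : ℂ) ^ (η - 1 - j.val) * (Nat.choose q (η - 1 - j.val) : ℂ)

lemma ones_vecMul_backDiff {η : ℕ} (hη : 0 < η) :
    (fun _ : Fin η => (1:ℂ)) ᵥ* backDiffC η = fvec η 0 := by
  funext j
  rw [vecMul_backDiff]
  by_cases h : j.val + 1 < η
  · have hm : 0 < η - 1 - j.val := by omega
    rw [dif_pos h]
    simp [fvec, Nat.choose_eq_zero_of_lt (by omega : 0 < η - 1 - j.val)]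
  · have hj : η - 1 - j.val = 0 := by have := j.isLt; omega
    rw [dif_neg h]
    simp [fvec, hj]

lemma fvec_vecMul_backDiff {η : ℕ} (q : ℕ) :
    fvec η q ᵥ* backDiffC η = fvec η (q + 1) := by
  funext j
  rw [vecMul_backDiff]
  by_cases h : j.val + 1 < η
  · rw [dif_pos h]
    have hm : η - 1 - j.val = (η - 1 - (j.val + 1)) + 1 := by omega
    set m := η - 1 - (j.val + 1) with hm'
    simp only [fvec, hm]
    rw [Nat.choose_succ_succ]
    push_cast
    ring
  · have hj : η - 1 - j.val = 0 := by have := j.isLt; omega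
    rw [dif_neg h]
    simp [fvec, hj]

lemma ones_vecMul_pow {η : ℕ} (hη : 0 < η) (q : ℕ) :
    (fun _ : Fin η => (1:ℂ)) ᵥ* (backDiffC η) ^ (q + 1) = fvec η q := by
  induction q with
  | zero => rw [pow_one]; exact ones_vecMul_backDiff hη
  | succ n ih =>
      rw [pow_succ, ← Matrix.vecMul_vecMul, ih, fvec_vecMul_backDiff]

lemma sum_norm_fvec {η q : ℕ} (hq : q + 1 ≤ η) :
    ∑ j : Fin η, ‖fvec η q j‖ = 2 ^ q := by
  have h1 : ∀ j : Fin η, ‖fvec η q j‖ = (Nat.choose q (η - 1 - j.val) : ℝ) := by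
    intro j
    simp [fvec, norm_mul, norm_pow]
  rw [Finset.sum_congr rfl (fun j _ => h1 j)]
  rw [Fin.sum_univ_eq_sum_range (fun i => (Nat.choose q (η - 1 - i) : ℝ))]
  rw [Finset.sum_range_reflect (fun i => (Nat.choose q i : ℝ)) η]
  rw [← Nat.cast_sum]
  have : ∑ i ∈ Finset.range η, Nat.choose q i = ∑ i ∈ Finset.range (q + 1), Nat.choose q i := by
    symm
    apply Finset.sum_subset
    · intro x hx
      simp only [Finset.mem_range] at *
      omega
    · intro x _ hx
      simp only [Finset.mem_range] at hx
      exact Nat.choose_eq_zero_of_lt (by omega)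
  rw [this, Nat.sum_range_choose]
  push_cast; ring

/-- The all-ones k×η matrix. -/
def onesM (k η : ℕ) : Matrix (Fin k) (Fin η) ℂ := Matrix.of fun _ _ => 1

/-- The Euclidean (ℓ²) norm of a finite vector. -/
noncomputable def l2norm {n : Type*} [Fintype n] (v : n → ℂ) : ℝ :=
  Real.sqrt (∑ i, ‖v i‖ ^ 2)

/-- The ∞-to-2 operator norm of a matrix: sup of ‖Tx‖₂ over ‖x‖_∞ = 1.
(The sup norm on `Fin n → ℂ` is the default Pi norm.) -/
noncomputable def normInfTwo {p n : Type*} [Fintype p] [Fintype n]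
    (T : Matrix p n ℂ) : ℝ :=
  sSup {c : ℝ | ∃ x : n → ℂ, ‖x‖ = 1 ∧ c = l2norm (T *ᵥ x)}

lemma rank_one_entries {k η : ℕ} (φ0 : Fin k → ℂ) (M : Matrix (Fin η) (Fin η) ℂ) :
    (Matrix.diagonal φ0)ᴴ * onesM k η * M
      = Matrix.of fun i j => (starRingEnd ℂ) (φ0 i) * ((fun _ : Fin η => (1:ℂ)) ᵥ* M) j := by
  ext i j
  simp only [Matrix.mul_apply, Matrix.conjTranspose_apply, onesM, Matrix.of_apply,
    Matrix.vecMul, dotProduct]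
  rw [Finset.mul_sum]
  apply Finset.sum_congr rfl
  intro l _
  rw [Finset.sum_mul]
  have : ∀ m : Fin k, star (Matrix.diagonal φ0 m i) * 1 * M l j
      = (if m = i then (starRingEnd ℂ) (φ0 i) * (1 * M l j) else 0) := by
    intro m
    rcases eq_or_ne m i with rfl | h
    · simp [Matrix.diagonal_apply_eq]
    · simp [Matrix.diagonal_apply_ne _ h, h]
  rw [Finset.sum_congr rfl (fun m _ => this m), Finset.sum_ite_eq' Finset.univ i]
  simp

lemma l2norm_smul_conj {k : ℕ} (φ0 : Fin k → ℂ) (c : ℂ) :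
    l2norm (fun i => (starRingEnd ℂ) (φ0 i) * c) = l2norm φ0 * ‖c‖ := by
  unfold l2norm
  rw [← Real.sqrt_sq (norm_nonneg c), ← Real.sqrt_mul (by positivity)]
  congr 1
  have h1 : ∀ i : Fin k, ‖(fun i => (starRingEnd ℂ) (φ0 i) * c) i‖ ^ 2 = ‖φ0 i‖ ^ 2 * ‖c‖ ^ 2 := by
    intro i
    simp only [norm_mul, RCLike.norm_conj]
    ring
  rw [Finset.sum_congr rfl (fun i _ => h1 i), ← Finset.sum_mul]

theorem stmt15 (k η p : ℕ) (hk : 0 < k) (hp : 1 ≤ p) (hη : p + 1 ≤ η)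
    (φ0 : Fin k → ℂ) (hφ0 : l2norm φ0 = 1)
    (V : Matrix (Fin k) (Fin k) ℂ) (hV : V = Matrix.diagonal φ0) :
    normInfTwo (Vᴴ * onesM k η * backDiffC η ^ p) = 2 ^ (p - 1) := by
  subst hV
  have hηpos : 0 < η := by omega
  set s : Fin η → ℂ := fvec η (p - 1) with hs
  have hones : (fun _ : Fin η => (1:ℂ)) ᵥ* (backDiffC η) ^ p = s := by
    have hp1 : p = (p - 1) + 1 := by omega
    rw [hp1]; exact ones_vecMul_pow hηpos (p - 1)
  have hT : (Matrix.diagonal φ0)ᴴ * onesM k η * backDiffC η ^ p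
      = Matrix.of fun i j => (starRingEnd ℂ) (φ0 i) * s j := by
    rw [rank_one_entries, hones]
  have hN : ∑ j : Fin η, ‖s j‖ = 2 ^ (p - 1) := sum_norm_fvec (by omega)
  have hTx : ∀ x : Fin η → ℂ,
      l2norm ((Matrix.of fun i j => (starRingEnd ℂ) (φ0 i) * s j : Matrix (Fin k) (Fin η) ℂ) *ᵥ x)
        = ‖∑ j, s j * x j‖ := by
    intro x
    have hmv : (Matrix.of fun i j => (starRingEnd ℂ) (φ0 i) * s j : Matrix (Fin k) (Fin η) ℂ) *ᵥ x
        = fun i => (starRingEnd ℂ) (φ0 i) * (∑ j, s j * x j) := by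
      funext i
      simp only [Matrix.mulVec, dotProduct, Matrix.of_apply, Finset.mul_sum]
      exact Finset.sum_congr rfl fun j _ => by ring
    rw [hmv, l2norm_smul_conj, hφ0, one_mul]
  rw [hT]
  unfold normInfTwo
  set N : ℝ := (2 : ℝ) ^ (p - 1) with hNdef
  have hNnn : (0:ℝ) ≤ N := by positivity
  have hub : ∀ c ∈ {c : ℝ | ∃ x : Fin η → ℂ, ‖x‖ = 1 ∧
      c = l2norm ((Matrix.of fun i j => (starRingEnd ℂ) (φ0 i) * s j : Matrix (Fin k) (Fin η) ℂ) *ᵥ x)},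
      c ≤ N := by
    rintro c ⟨x, hx, rfl⟩
    rw [hTx x]
    calc ‖∑ j, s j * x j‖ ≤ ∑ j, ‖s j * x j‖ := norm_sum_le _ _
      _ ≤ ∑ j, ‖s j‖ := by
          apply Finset.sum_le_sum
          intro j _
          rw [norm_mul]
          have h1 := norm_le_pi_norm x j
          rw [hx] at h1
          nlinarith [norm_nonneg (s j)]
      _ = N := hN
  have hmem : N ∈ {c : ℝ | ∃ x : Fin η → ℂ, ‖x‖ = 1 ∧
      c = l2norm ((Matrix.of fun i j => (starRingEnd ℂ) (φ0 i) * s j : Matrix (Fin k) (Fin η) ℂ) *ᵥ x)} := by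
    refine ⟨fun j => if s j = 0 then 1 else (starRingEnd ℂ) (s j) / (‖s j‖ : ℂ), ?_, ?_⟩
    · have hxn : ∀ j : Fin η, ‖(if s j = 0 then 1 else (starRingEnd ℂ) (s j) / (‖s j‖ : ℂ))‖ = 1 := by
        intro j
        by_cases h : s j = 0
        · simp [h]
        · rw [if_neg h, norm_div, RCLike.norm_conj, Complex.norm_real, norm_norm,
            div_self (norm_ne_zero_iff.2 h)]
      apply le_antisymm
      · exact (pi_norm_le_iff_of_nonneg zero_le_one).2 fun j => le_of_eq (hxn j)
      · have h2 := norm_le_pi_norm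
          (fun j : Fin η => if s j = 0 then (1:ℂ) else (starRingEnd ℂ) (s j) / (‖s j‖ : ℂ)) ⟨0, hηpos⟩
        rw [hxn ⟨0, hηpos⟩] at h2
        exact h2
    · rw [hTx]
      have hsum : ∑ j, s j * (if s j = 0 then 1 else (starRingEnd ℂ) (s j) / (‖s j‖ : ℂ))
          = ((∑ j, ‖s j‖ : ℝ) : ℂ) := by
        push_cast
        apply Finset.sum_congr rfl
        intro j _
        by_cases h : s j = 0
        · simp [h]
        · rw [if_neg h]
          rw [mul_div_assoc']
          rw [Complex.mul_conj']
          rw [sq]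
          rw [mul_div_assoc, div_self (by exact_mod_cast norm_ne_zero_iff.2 h), mul_one]
      rw [hsum, hN]
      rw [Complex.norm_real]
      rw [Real.norm_of_nonneg hNnn]
  apply le_antisymm
  · exact Real.sSup_le hub hNnn
  · exact le_csSup ⟨N, hub⟩ hmem
end
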